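/- Let (X,S) be an X3C instance. Construct the following allocation instance on a tree: for each S ∈ S there are two paths P_S = (v_{S,1}, v_{S,2}, v_{S,3}) and P̂_S = (v̂_{S,1}, v̂_{S,2}, v̂_{S,3}), and there is one additional center vertex c adjacent to v_{S,2} and to v̂_{S,2} for every S ∈ S; G is the resulting tree. The agents, all with binary additive valuations, are: for each x ∈ X, an agent i_x approving exactly the items v_{S,j} with S^j = x, and an agent î_x approving exactly the items v̂_{S,j} with S^j = x; and for each k ∈ {1,…,s−r}, an agent d_k approving exactly all items v_{S,j} (S ∈ S, j ∈ {1,2,3}) and an agent d̂_k approving exactly all items v̂_{S,j}. Let N_o = {i_x : x ∈ X} ∪ {d_1,…,d_{s−r}} and V_o = {v_{S,j} : S ∈ S, j ∈ {1,2,3}}. Then for every Pareto-optimal connected allocation π satisfying π(i) ⊆ V_o for every i ∈ N_o, the following are equivalent: (a) u_{i_x}(π(i_x)) = 1 for all x ∈ X and u_{d_k}(π(d_k)) = 3 for all k ∈ {1,…,s−r}; (b) the X3C instance (X,S) has an exact cover. -/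

import Mathlib

open Finset

/-- A finite set of items is *connected* in the item graph `G` if the induced
subgraph is preconnected (the empty set counts as connected). -/
def ConnSet {V : Type*} (G : SimpleGraph V) (X : Finset V) : Prop :=
  (G.induce (X : Set V)).Preconnected

/-- `π` is a connected allocation of the items in `R` among the agents in `N`. -/
def IsConnAllocOn {V N : Type*} [DecidableEq V] (G : SimpleGraph V)
    (R : Finset V) (π : N → Finset V) : Prop :=
  (∀ i, π i ⊆ R) ∧ (∀ i, ConnSet G (π i)) ∧
    (∀ i j, i ≠ j → Disjoint (π i) (π j)) ∧ (∀ v ∈ R, ∃ i, v ∈ π i)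

/-- `π` is a connected allocation of all items among the agents in `N`. -/
def IsConnAlloc {V N : Type*} [Fintype V] [DecidableEq V] (G : SimpleGraph V)
    (π : N → Finset V) : Prop :=
  IsConnAllocOn G Finset.univ π

/-- `π'` is a Pareto-improvement of `π`. -/
def ParetoImproves {V N : Type*} (u : N → Finset V → ℝ)
    (π' π : N → Finset V) : Prop :=
  (∀ i, u i (π i) ≤ u i (π' i)) ∧ ∃ i, u i (π i) < u i (π' i)

/-- `π` is Pareto-optimal: no connected allocation Pareto-improves it. -/
def ParetoOptimal {V N : Type*} [Fintype V] [DecidableEq V] (G : SimpleGraph V)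
    (u : N → Finset V → ℝ) (π : N → Finset V) : Prop :=
  ∀ π', IsConnAlloc G π' → ¬ ParetoImproves u π' π

/-- `π` satisfies EF1: any envy can be removed by deleting a single item
(keeping the envied bundle connected). -/
def EF1 {V N : Type*} [Fintype V] [DecidableEq V] (G : SimpleGraph V)
    (u : N → Finset V → ℝ) (π : N → Finset V) : Prop :=
  ∀ i j, u i (π j) ≤ u i (π i) ∨
    ∃ v ∈ π j, ConnSet G ((π j).erase v) ∧ u i ((π j).erase v) ≤ u i (π i)

/-- The maximin fair share of an agent with valuation `u`, when the items are
divided into `|N|` connected bundles. -/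
noncomputable def mmsVal {V : Type*} (N : Type*) [Fintype V] [DecidableEq V]
    (G : SimpleGraph V) (u : Finset V → ℝ) : ℝ :=
  sSup {x : ℝ | ∃ P : N → Finset V, IsConnAlloc G P ∧
    x = sInf (Set.range fun j => u (P j))}

/-- `π` is an MMS allocation: every agent gets at least her maximin fair share. -/
def IsMMS {V N : Type*} [Fintype V] [DecidableEq V] (G : SimpleGraph V)
    (u : N → Finset V → ℝ) (π : N → Finset V) : Prop :=
  ∀ i, mmsVal N G (u i) ≤ u i (π i)

namespace Stmt5Aux

def TG (s : ℕ) : SimpleGraph (Option (Fin s × Bool × Fin 3)) :=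
  SimpleGraph.fromRel (fun a b =>
      (∃ (k : Fin s) (c : Bool) (j j' : Fin 3),
          a = some (k, c, j) ∧ b = some (k, c, j') ∧ (j : ℕ) + 1 = (j' : ℕ)) ∨
      (∃ (k : Fin s) (c : Bool), a = none ∧ b = some (k, c, 1)))

variable {s : ℕ}

def cmp : Option (Fin s × Bool × Fin 3) → Option (Fin s × Bool) :=
  Option.map (fun p => (p.1, p.2.1))

lemma cmp_some {k : Fin s} {c j} : cmp (some (k, c, j)) = some (k, c) := rfl

lemma adj_cases {a b : Option (Fin s × Bool × Fin 3)} (h : (TG s).Adj a b) :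
    a = none ∨ b = none ∨ cmp a = cmp b := by
  rw [TG, SimpleGraph.fromRel_adj] at h
  rcases h.2 with (⟨k, c, j, j', ha, hb, _⟩ | ⟨k, c, ha, hb⟩) |
    (⟨k, c, j, j', hb, ha, _⟩ | ⟨k, c, hb, ha⟩)
  · exact Or.inr (Or.inr (by rw [ha, hb]; rfl))
  · exact Or.inl ha
  · exact Or.inr (Or.inr (by rw [ha, hb]; rfl))
  · exact Or.inr (Or.inl hb)

lemma adj_path {k : Fin s} {c : Bool} {j j' : Fin 3} (h : (j : ℕ) + 1 = (j' : ℕ)) :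
    (TG s).Adj (some (k, c, j)) (some (k, c, j')) := by
  rw [TG, SimpleGraph.fromRel_adj]
  refine ⟨by simp; omega, Or.inl (Or.inl ⟨k, c, j, j', rfl, rfl, h⟩)⟩

lemma adj_center {k : Fin s} {c : Bool} :
    (TG s).Adj none (some (k, c, 1)) := by
  rw [TG, SimpleGraph.fromRel_adj]
  exact ⟨by simp, Or.inl (Or.inr ⟨k, c, rfl, rfl⟩)⟩

lemma walk_cmp {X : Finset (Option (Fin s × Bool × Fin 3))} (hn : none ∉ X)
    (a b : ((X : Set (Option (Fin s × Bool × Fin 3))))) :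
    ((TG s).induce (X : Set _)).Walk a b → cmp a.1 = cmp b.1 := by
  intro w
  induction w with
  | nil => rfl
  | @cons u v _ hadj _ ih =>
    have hadj' : (TG s).Adj u.1 v.1 := hadj
    have hu : u.1 ≠ none := fun e => hn (by simpa using e ▸ u.2)
    have hv : v.1 ≠ none := fun e => hn (by simpa using e ▸ v.2)
    rcases adj_cases hadj' with h1 | h1 | h1
    · exact absurd h1 hu
    · exact absurd h1 hv
    · exact h1.trans ih

/-- On a connected finset avoiding the center, `cmp` is constant. -/
lemma connset_cmp {X : Finset (Option (Fin s × Bool × Fin 3))}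
    (h : ConnSet (TG s) X) (hn : none ∉ X) :
    ∀ a ∈ X, ∀ b ∈ X, cmp a = cmp b := by
  intro a ha b hb
  obtain ⟨w⟩ := h ⟨a, by simpa using ha⟩ ⟨b, by simpa using hb⟩
  exact walk_cmp hn _ _ w


lemma connset_of_subsingleton {V : Type*} {G : SimpleGraph V} {X : Finset V}
    (h : ∀ a ∈ X, ∀ b ∈ X, a = b) : ConnSet G X := by
  intro a b
  have : a = b := Subtype.ext (h a.1 (by simpa using a.2) b.1 (by simpa using b.2))
  exact this ▸ SimpleGraph.Reachable.refl a

def pathF (s : ℕ) (k : Fin s) (c : Bool) : Finset (Option (Fin s × Bool × Fin 3)) :=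
  {some (k, c, 0), some (k, c, 1), some (k, c, 2)}

lemma mem_pathF {k : Fin s} {c : Bool} {v} :
    v ∈ pathF s k c ↔ ∃ j, v = some (k, c, j) := by
  simp only [pathF, Finset.mem_insert, Finset.mem_singleton]
  constructor
  · rintro (h | h | h) <;> exact ⟨_, h⟩
  · rintro ⟨j, rfl⟩
    fin_cases j <;> simp

lemma card_pathF {k : Fin s} {c : Bool} : (pathF s k c).card = 3 := by
  rw [pathF]
  rw [Finset.card_insert_of_notMem (by simp), Finset.card_insert_of_notMem (by simp),
    Finset.card_singleton]

lemma connset_pathF {k : Fin s} {c : Bool} : ConnSet (TG s) (pathF s k c) := by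
  intro a b
  have key : ∀ v : ((pathF s k c : Finset _) : Set _),
      ((TG s).induce _).Reachable v ⟨some (k, c, 1), by simp [mem_pathF]⟩ := by
    rintro ⟨v, hv⟩
    have hv' : v ∈ pathF s k c := by simpa using hv
    rw [mem_pathF] at hv'
    obtain ⟨j, rfl⟩ := hv'
    fin_cases j
    · exact SimpleGraph.Adj.reachable (by
        show (TG s).Adj (some (k, c, 0)) (some (k, c, 1))
        exact adj_path (by simp))
    · exact SimpleGraph.Reachable.refl _
    · exact SimpleGraph.Adj.reachable (by
        show (TG s).Adj (some (k, c, 2)) (some (k, c, 1))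
        exact (adj_path (j := 1) (j' := 2) (by simp)).symm)
  exact (key a).trans (key b).symm


def isOrigB : Option (Fin s × Bool × Fin 3) → Bool
  | some (_, false, _) => true
  | _ => false

lemma isOrigB_iff {v : Option (Fin s × Bool × Fin 3)} :
    isOrigB v = true ↔ ∃ k j, v = some (k, false, j) := by
  constructor
  · intro h
    match v, h with
    | some (k, false, j), _ => exact ⟨k, j, rfl⟩
  · rintro ⟨k, j, rfl⟩; rfl

@[simp] lemma isOrigB_some_false {k : Fin s} {j : Fin 3} :
    isOrigB (some (k, false, j)) = true := rfl

@[simp] lemma isOrigB_some_true {k : Fin s} {j : Fin 3} :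
    isOrigB (some (k, true, j)) = false := rfl

@[simp] lemma isOrigB_none : isOrigB (none : Option (Fin s × Bool × Fin 3)) = false := rfl

lemma isOrigB_of_cmp {a : Option (Fin s × Bool × Fin 3)} {k : Fin s}
    (h : cmp a = some (k, false)) : isOrigB a = true := by
  match a with
  | none => simp [cmp] at h
  | some (k', c', j') =>
    simp only [cmp, Option.map_some, Option.some.injEq, Prod.mk.injEq] at h
    rw [isOrigB_iff]
    exact ⟨k', j', by rw [h.2]⟩

lemma adj_keep_orig {a b : Option (Fin s × Bool × Fin 3)} (h : (TG s).Adj a b)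
    (ha : isOrigB a = false) (hb : isOrigB b = true) : a = none := by
  rcases adj_cases h with h1 | h1 | h1
  · exact h1
  · rw [h1] at hb; simp [isOrigB_none] at hb
  · obtain ⟨k, j, rfl⟩ := isOrigB_iff.mp hb
    rw [isOrigB_of_cmp (h1.trans cmp_some)] at ha
    simp at ha

/-- Walk lemma: restricting a connected set to its non-original part. -/
lemma walk_keep {X : Finset (Option (Fin s × Bool × Fin 3))}
    (X' : Finset (Option (Fin s × Bool × Fin 3)))
    (hX' : X' = X.filter (fun v => isOrigB v = false)) :
    ∀ (a b : ((X : Set (Option (Fin s × Bool × Fin 3))))),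
    ((TG s).induce (X : Set _)).Walk a b → ∀ (hb : b.1 ∈ X'),
    (∀ (ha : a.1 ∈ X'), ((TG s).induce (X' : Set _)).Reachable ⟨a.1, ha⟩ ⟨b.1, hb⟩) ∧
    (isOrigB a.1 = true → ∀ (hn : (none : Option _) ∈ X'),
      ((TG s).induce (X' : Set _)).Reachable ⟨none, hn⟩ ⟨b.1, hb⟩) := by
  intro a b w
  induction w with
  | nil =>
    intro hb
    refine ⟨fun ha => SimpleGraph.Reachable.refl _, fun ho hn => ?_⟩
    rw [hX', Finset.mem_filter] at hb
    rw [hb.2] at ho; simp at ho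
  | @cons p q rr hadj w' ih =>
    intro hb
    have hadj' : (TG s).Adj p.1 q.1 := hadj
    by_cases hq : q.1 ∈ X'
    · have ihq := ih hb
      by_cases hporig : isOrigB p.1 = true
      · -- p original, q kept: q = none
        have hqnone : q.1 = none := by
          refine adj_keep_orig hadj'.symm ?_ hporig
          rw [hX', Finset.mem_filter] at hq; exact hq.2
        refine ⟨fun hp => ?_, fun _ hn => ?_⟩
        · rw [hX', Finset.mem_filter] at hp
          rw [hp.2] at hporig; simp at hporig
        · have := (ihq.1 hq)
          have e : (⟨q.1, hq⟩ : ((X' : Set _))) = ⟨none, hn⟩ := Subtype.ext hqnone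
          rw [e] at this; exact this
      · -- p kept (if in X')
        refine ⟨fun hp => ?_, fun ho _ => by rw [ho] at hporig; simp at hporig⟩
        have hadj'' : ((TG s).induce (X' : Set _)).Adj ⟨p.1, hp⟩ ⟨q.1, hq⟩ := by
          refine SimpleGraph.comap_adj.mpr ?_
          exact hadj'
        exact (hadj''.reachable).trans (ihq.1 hq)
    · -- q original
      have hqorig : isOrigB q.1 = true := by
        by_contra hc
        exact hq (by rw [hX', Finset.mem_filter]
                     exact ⟨by simpa using q.2, by simpa using hc⟩)
      have ihq := (ih hb).2 hqorig
      refine ⟨fun hp => ?_, fun _ hn => ihq hn⟩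
      -- p kept, q orig: p = none
      have hpkeep : isOrigB p.1 = false := by
        rw [hX', Finset.mem_filter] at hp; exact hp.2
      have hpnone : p.1 = none := adj_keep_orig hadj' hpkeep hqorig
      have hn : (none : Option _) ∈ X' := hpnone ▸ hp
      have := ihq hn
      have e : (⟨p.1, hp⟩ : ((X' : Set _))) = ⟨none, hn⟩ := Subtype.ext hpnone
      rw [e]; exact this

lemma connset_keep {X : Finset (Option (Fin s × Bool × Fin 3))}
    (h : ConnSet (TG s) X) :
    ConnSet (TG s) (X.filter (fun v => isOrigB v = false)) := by
  set X' := X.filter (fun v => isOrigB v = false) with hX'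
  rintro ⟨a, ha⟩ ⟨b, hb⟩
  have ha' : a ∈ X' := by simpa using ha
  have hb' : b ∈ X' := by simpa using hb
  have haX : a ∈ X := (Finset.mem_filter.mp ha').1
  have hbX : b ∈ X := (Finset.mem_filter.mp hb').1
  obtain ⟨w⟩ := h ⟨a, by simpa using haX⟩ ⟨b, by simpa using hbX⟩
  have := (walk_keep X' hX' _ _ w hb').1 ha'
  exact this

end Stmt5Aux



theorem stmt5 (r s : ℕ) (hrs : r ≤ s)
    (S : Fin s → Fin 3 → Fin (3 * r)) (hS : ∀ k, Function.Injective (S k))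
    (G : SimpleGraph (Option (Fin s × Bool × Fin 3)))
    (hG : G = SimpleGraph.fromRel (fun a b =>
      (∃ (k : Fin s) (c : Bool) (j j' : Fin 3),
          a = some (k, c, j) ∧ b = some (k, c, j') ∧ (j : ℕ) + 1 = (j' : ℕ)) ∨
      (∃ (k : Fin s) (c : Bool), a = none ∧ b = some (k, c, 1))))
    (A : ((Fin (3 * r) ⊕ Fin (s - r)) × Bool) →
      Finset (Option (Fin s × Bool × Fin 3)))
    (hAx : ∀ x c, A (Sum.inl x, c) =
      Finset.univ.filter (fun v => ∃ k j, v = some (k, c, j) ∧ S k j = x))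
    (hAd : ∀ k c, A (Sum.inr k, c) =
      Finset.univ.filter (fun v => ∃ k' j, v = some (k', c, j)))
    (u : ((Fin (3 * r) ⊕ Fin (s - r)) × Bool) →
      Finset (Option (Fin s × Bool × Fin 3)) → ℝ)
    (hu : ∀ i X, u i X = ((X ∩ A i).card : ℝ))
    (π : ((Fin (3 * r) ⊕ Fin (s - r)) × Bool) →
      Finset (Option (Fin s × Bool × Fin 3)))
    (hπ : IsConnAlloc G π) (hPO : ParetoOptimal G u π)
    (horig : ∀ a : Fin (3 * r) ⊕ Fin (s - r), π (a, false) ⊆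
      Finset.univ.filter (fun v => ∃ k j, v = some (k, false, j))) :
    ((∀ x, u (Sum.inl x, false) (π (Sum.inl x, false)) = 1) ∧
     (∀ k, u (Sum.inr k, false) (π (Sum.inr k, false)) = 3)) ↔
    (∃ S' : Finset (Fin s), S'.card = r ∧
      ∀ x : Fin (3 * r), ∃ k ∈ S', ∃ j, S k j = x) := by
  have hGT : G = Stmt5Aux.TG s := hG
  subst hGT
  have hconn := hπ.2.1
  have hdisj := hπ.2.2.1
  have hcover := hπ.2.2.2
  have hmemA_x : ∀ (x : Fin (3 * r)) (c : Bool) (v), v ∈ A (Sum.inl x, c) ↔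
      ∃ k j, v = some (k, c, j) ∧ S k j = x := by
    intro x c v; rw [hAx]; simp
  have hmemA_d : ∀ (m : Fin (s - r)) (c : Bool) (v), v ∈ A (Sum.inr m, c) ↔
      ∃ k j, v = some (k, c, j) := by
    intro m c v; rw [hAd]; simp
  have horig' : ∀ (a) (v), v ∈ π (a, false) → ∃ k j, v = some (k, false, j) := by
    intro a v hv
    have h := horig a hv
    simp only [Finset.mem_filter] at h
    exact h.2
  have hnone : ∀ a, (none : Option (Fin s × Bool × Fin 3)) ∉ π (a, false) := by
    intro a hn
    obtain ⟨k, j, h⟩ := horig' a none hn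
    exact nomatch h
  have hsame : ∀ (a) (v w), v ∈ π (a, false) → w ∈ π (a, false) →
      Stmt5Aux.cmp v = Stmt5Aux.cmp w := by
    intro a v w hv hw
    exact Stmt5Aux.connset_cmp (hconn (a, false)) (hnone a) v hv w hw
  have hpathsub : ∀ (a), (π (a, false)).Nonempty →
      ∃ k, π (a, false) ⊆ Stmt5Aux.pathF s k false := by
    rintro a ⟨v₀, hv₀⟩
    obtain ⟨k₀, j₀, hveq⟩ := horig' a v₀ hv₀
    refine ⟨k₀, fun v hv => ?_⟩
    obtain ⟨k, j, rfl⟩ := horig' a v hv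
    have hc := hsame a _ _ hv hv₀
    rw [hveq] at hc
    simp only [Stmt5Aux.cmp, Option.map_some, Option.some.injEq, Prod.mk.injEq] at hc
    rw [Stmt5Aux.mem_pathF]
    exact ⟨j, by rw [hc.1]⟩
  have hub1 : ∀ x : Fin (3 * r),
      (π (Sum.inl x, false) ∩ A (Sum.inl x, false)).card ≤ 1 := by
    intro x
    refine Finset.card_le_one.mpr ?_
    intro v hv w hw
    rw [Finset.mem_inter] at hv hw
    obtain ⟨k, j, hveq, hSv⟩ := (hmemA_x x false v).mp hv.2
    obtain ⟨k', j', hweq, hSw⟩ := (hmemA_x x false w).mp hw.2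
    have hc := hsame _ _ _ hv.1 hw.1
    rw [hveq, hweq] at hc
    simp only [Stmt5Aux.cmp, Option.map_some, Option.some.injEq, Prod.mk.injEq] at hc
    subst hveq hweq
    obtain ⟨hk, -⟩ := hc
    subst hk
    have : j = j' := hS k (hSv.trans hSw.symm)
    rw [this]
  have hub3 : ∀ m : Fin (s - r),
      (π (Sum.inr m, false) ∩ A (Sum.inr m, false)).card ≤ 3 := by
    intro m
    rcases (π (Sum.inr m, false)).eq_empty_or_nonempty with h | h
    · rw [h]; simp
    · obtain ⟨k, hk⟩ := hpathsub _ h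
      calc (π (Sum.inr m, false) ∩ A (Sum.inr m, false)).card
          ≤ (Stmt5Aux.pathF s k false).card :=
            Finset.card_le_card ((Finset.inter_subset_left).trans hk)
        _ = 3 := Stmt5Aux.card_pathF
  have hsubA_d : ∀ m : Fin (s - r),
      π (Sum.inr m, false) ∩ A (Sum.inr m, false) = π (Sum.inr m, false) := by
    intro m
    apply Finset.inter_eq_left.mpr
    intro v hv
    rw [hmemA_d]
    exact horig' _ v hv
  constructor
  · rintro ⟨h1, h2⟩
    have hd3 : ∀ m : Fin (s - r), ∃ k, π (Sum.inr m, false) = Stmt5Aux.pathF s k false := by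
      intro m
      have hcard : (π (Sum.inr m, false)).card = 3 := by
        have := h2 m
        rw [hu, hsubA_d] at this
        exact_mod_cast this
      have hne : (π (Sum.inr m, false)).Nonempty := by
        rw [← Finset.card_pos, hcard]; norm_num
      obtain ⟨k, hk⟩ := hpathsub _ hne
      exact ⟨k, Finset.eq_of_subset_of_card_le hk
        (by rw [hcard, Stmt5Aux.card_pathF])⟩
    choose φ hφ using hd3
    have hφinj : Function.Injective φ := by
      intro m m' hmm
      by_contra hne
      have hd := hdisj (Sum.inr m, false) (Sum.inr m', false) (by simp [hne])
      rw [hφ m, hφ m', hmm] at hd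
      have hmem : some (φ m', false, (0 : Fin 3)) ∈ Stmt5Aux.pathF s (φ m') false := by
        rw [Stmt5Aux.mem_pathF]; exact ⟨0, rfl⟩
      exact (Finset.disjoint_left.mp hd hmem) hmem
    refine ⟨Finset.univ \ Finset.image φ Finset.univ, ?_, ?_⟩
    · rw [Finset.card_sdiff_of_subset (Finset.subset_univ _),
        Finset.card_image_of_injective _ hφinj, Finset.card_univ, Finset.card_univ]
      simp only [Fintype.card_fin]
      omega
    · intro x
      have hx1 : (π (Sum.inl x, false) ∩ A (Sum.inl x, false)).card = 1 := by
        have := h1 x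
        rw [hu] at this
        exact_mod_cast this
      obtain ⟨v, hv⟩ := Finset.card_pos.mp (by rw [hx1]; norm_num)
      rw [Finset.mem_inter] at hv
      obtain ⟨k, j, hveq, hSkj⟩ := (hmemA_x x false v).mp hv.2
      refine ⟨k, ?_, j, hSkj⟩
      rw [Finset.mem_sdiff]
      refine ⟨Finset.mem_univ _, fun hk => ?_⟩
      rw [Finset.mem_image] at hk
      obtain ⟨m, -, hm⟩ := hk
      have hvpath : v ∈ π (Sum.inr m, false) := by
        rw [hφ m, hm, Stmt5Aux.mem_pathF]; exact ⟨j, hveq⟩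
      have hd := hdisj (Sum.inl x, false) (Sum.inr m, false) (by simp)
      exact Finset.disjoint_left.mp hd hv.1 hvpath
  · rintro ⟨S', hS'card, hcov⟩
    by_contra hnot
    choose g₁ hg₁ g₂ hg₂ using hcov
    have hfinj : Function.Injective (fun x : Fin (3 * r) => (g₁ x, g₂ x)) := by
      intro x y hxy
      simp only [Prod.mk.injEq] at hxy
      calc x = S (g₁ x) (g₂ x) := (hg₂ x).symm
        _ = S (g₁ y) (g₂ y) := by rw [hxy.1, hxy.2]
        _ = y := hg₂ y
    have hsurj : ∀ k ∈ S', ∀ j : Fin 3, ∃ x, g₁ x = k ∧ g₂ x = j := by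
      have himg : Finset.image (fun x : Fin (3 * r) => (g₁ x, g₂ x)) Finset.univ
          = S' ×ˢ (Finset.univ : Finset (Fin 3)) := by
        apply Finset.eq_of_subset_of_card_le
        · intro p hp
          rw [Finset.mem_image] at hp
          obtain ⟨x, -, rfl⟩ := hp
          exact Finset.mem_product.mpr ⟨hg₁ x, Finset.mem_univ _⟩
        · rw [Finset.card_product, hS'card,
            Finset.card_image_of_injective _ hfinj, Finset.card_univ, Finset.card_univ]
          simp only [Fintype.card_fin]
          omega
      intro k hk j
      have hmem : (k, j) ∈ S' ×ˢ (Finset.univ : Finset (Fin 3)) :=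
        Finset.mem_product.mpr ⟨hk, Finset.mem_univ _⟩
      rw [← himg, Finset.mem_image] at hmem
      obtain ⟨x, -, hx⟩ := hmem
      simp only [Prod.mk.injEq] at hx
      exact ⟨x, hx.1, hx.2⟩
    have hCcard : ((Finset.univ : Finset (Fin s)) \ S').card = s - r := by
      rw [Finset.card_sdiff_of_subset (Finset.subset_univ _), hS'card, Finset.card_univ]
      simp
    set C := (Finset.univ : Finset (Fin s)) \ S' with hC
    let e : Fin (s - r) → Fin s := fun m => (C.equivFin.symm (Fin.cast hCcard.symm m)).1
    have he_mem : ∀ m, e m ∈ C := fun m => (C.equivFin.symm _).2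
    have he_notS' : ∀ m, e m ∉ S' := by
      intro m
      have := he_mem m
      rw [hC, Finset.mem_sdiff] at this
      exact this.2
    have he_inj : Function.Injective e := by
      intro m m' h
      have h2 := C.equivFin.symm.injective (Subtype.ext h)
      exact Fin.ext (by simpa using congrArg Fin.val h2)
    have he_surj : ∀ k ∈ C, ∃ m, e m = k := by
      intro k hk
      refine ⟨Fin.cast hCcard (C.equivFin ⟨k, hk⟩), ?_⟩
      show (C.equivFin.symm (Fin.cast hCcard.symm (Fin.cast hCcard (C.equivFin ⟨k, hk⟩)))).1 = k
      have hcast : Fin.cast hCcard.symm (Fin.cast hCcard (C.equivFin ⟨k, hk⟩))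
          = C.equivFin ⟨k, hk⟩ := by
        ext; simp
      rw [hcast, Equiv.symm_apply_apply]
    let π' : ((Fin (3 * r) ⊕ Fin (s - r)) × Bool) →
        Finset (Option (Fin s × Bool × Fin 3)) := fun i =>
      if i.2 then (π (i.1, true)).filter (fun v => Stmt5Aux.isOrigB v = false)
      else Sum.elim (fun x => ({some (g₁ x, false, g₂ x)} : Finset _))
        (fun m => Stmt5Aux.pathF s (e m) false) i.1
    have e1 : ∀ x, π' (Sum.inl x, false) = {some (g₁ x, false, g₂ x)} := fun _ => rfl
    have e2 : ∀ m, π' (Sum.inr m, false) = Stmt5Aux.pathF s (e m) false := fun _ => rfl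
    have e3 : ∀ a, π' (a, true) =
        (π (a, true)).filter (fun v => Stmt5Aux.isOrigB v = false) := fun _ => rfl
    have halloc : IsConnAlloc (Stmt5Aux.TG s) π' := by
      refine ⟨fun i => Finset.subset_univ _, ?_, ?_, ?_⟩
      · rintro ⟨a, c⟩
        cases c
        · rcases a with x | m
          · rw [e1 x]
            refine Stmt5Aux.connset_of_subsingleton ?_
            intro a ha b hb
            rw [Finset.mem_singleton] at ha hb
            rw [ha, hb]
          · rw [e2 m]
            exact Stmt5Aux.connset_pathF
        · rw [e3 a]
          exact Stmt5Aux.connset_keep (hconn (a, true))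
      · rintro ⟨ai, ci⟩ ⟨aj, cj⟩ hij
        rw [Finset.disjoint_left]
        intro v hvi hvj
        cases ci <;> cases cj
        · rcases ai with x | m <;> rcases aj with y | m'
          · rw [e1 x, Finset.mem_singleton] at hvi
            rw [e1 y, Finset.mem_singleton] at hvj
            have hxy : x ≠ y := fun h => hij (by rw [h])
            have heq : (g₁ x, g₂ x) = (g₁ y, g₂ y) := by
              have h0 := hvi.symm.trans hvj
              simp only [Option.some.injEq, Prod.mk.injEq] at h0
              exact Prod.ext h0.1 h0.2.2
            exact hxy (hfinj heq)
          · rw [e1 x, Finset.mem_singleton] at hvi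
            rw [e2 m', Stmt5Aux.mem_pathF] at hvj
            obtain ⟨j, hj⟩ := hvj
            rw [hvi] at hj
            simp only [Option.some.injEq, Prod.mk.injEq] at hj
            exact he_notS' m' (hj.1 ▸ hg₁ x)
          · rw [e2 m, Stmt5Aux.mem_pathF] at hvi
            rw [e1 y, Finset.mem_singleton] at hvj
            obtain ⟨j, hj⟩ := hvi
            rw [hvj] at hj
            simp only [Option.some.injEq, Prod.mk.injEq] at hj
            exact he_notS' m (hj.1.symm ▸ hg₁ y)
          · rw [e2 m, Stmt5Aux.mem_pathF] at hvi
            rw [e2 m', Stmt5Aux.mem_pathF] at hvj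
            obtain ⟨j1, rfl⟩ := hvi
            obtain ⟨j2, hj⟩ := hvj
            simp only [Option.some.injEq, Prod.mk.injEq] at hj
            exact hij (by rw [he_inj hj.1])
        · rw [e3 aj, Finset.mem_filter] at hvj
          have hkeep := hvj.2
          rcases ai with x | m
          · rw [e1 x, Finset.mem_singleton] at hvi
            rw [hvi] at hkeep
            simp at hkeep
          · rw [e2 m, Stmt5Aux.mem_pathF] at hvi
            obtain ⟨j, rfl⟩ := hvi
            simp at hkeep
        · rw [e3 ai, Finset.mem_filter] at hvi
          have hkeep := hvi.2
          rcases aj with x | m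
          · rw [e1 x, Finset.mem_singleton] at hvj
            rw [hvj] at hkeep
            simp at hkeep
          · rw [e2 m, Stmt5Aux.mem_pathF] at hvj
            obtain ⟨j, rfl⟩ := hvj
            simp at hkeep
        · rw [e3 ai, Finset.mem_filter] at hvi
          rw [e3 aj, Finset.mem_filter] at hvj
          exact Finset.disjoint_left.mp (hdisj _ _ hij) hvi.1 hvj.1
      · intro v _
        rcases v with _ | ⟨k, b, j⟩
        · obtain ⟨⟨a, c⟩, hi⟩ := hcover none (Finset.mem_univ _)
          cases c
          · exact absurd hi (hnone a)
          · exact ⟨(a, true), by rw [e3 a]; exact Finset.mem_filter.mpr ⟨hi, rfl⟩⟩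
        · cases b
          · by_cases hk : k ∈ S'
            · obtain ⟨x, hx1, hx2⟩ := hsurj k hk j
              refine ⟨(Sum.inl x, false), ?_⟩
              rw [e1 x, Finset.mem_singleton, hx1, hx2]
            · obtain ⟨m, hm⟩ := he_surj k
                (by rw [hC, Finset.mem_sdiff]; exact ⟨Finset.mem_univ _, hk⟩)
              refine ⟨(Sum.inr m, false), ?_⟩
              rw [e2 m, Stmt5Aux.mem_pathF]
              exact ⟨j, by rw [hm]⟩
          · obtain ⟨⟨a, c⟩, hi⟩ := hcover (some (k, true, j)) (Finset.mem_univ _)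
            cases c
            · obtain ⟨k', j', hkj⟩ := horig' a _ hi
              simp at hkj
            · exact ⟨(a, true), by rw [e3 a]; exact Finset.mem_filter.mpr ⟨hi, rfl⟩⟩
    have hval1 : ∀ x, u (Sum.inl x, false) (π' (Sum.inl x, false)) = 1 := by
      intro x
      rw [hu, e1 x]
      have heq : ({some (g₁ x, false, g₂ x)} : Finset _) ∩ A (Sum.inl x, false)
          = {some (g₁ x, false, g₂ x)} := by
        apply Finset.inter_eq_left.mpr
        intro v hv
        rw [Finset.mem_singleton] at hv
        rw [hv, hmemA_x]
        exact ⟨g₁ x, g₂ x, rfl, hg₂ x⟩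
      rw [heq]
      simp
    have hval3 : ∀ m, u (Sum.inr m, false) (π' (Sum.inr m, false)) = 3 := by
      intro m
      rw [hu, e2 m]
      have heq : Stmt5Aux.pathF s (e m) false ∩ A (Sum.inr m, false)
          = Stmt5Aux.pathF s (e m) false := by
        apply Finset.inter_eq_left.mpr
        intro v hv
        rw [Stmt5Aux.mem_pathF] at hv
        obtain ⟨j, rfl⟩ := hv
        rw [hmemA_d]
        exact ⟨e m, j, rfl⟩
      rw [heq, Stmt5Aux.card_pathF]
      norm_num
    have hvalc : ∀ a, u (a, true) (π' (a, true)) = u (a, true) (π (a, true)) := by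
      intro a
      have hAc : ∀ v ∈ A (a, true), Stmt5Aux.isOrigB v = false := by
        rcases a with x | m
        · intro v hv
          rw [hmemA_x] at hv
          obtain ⟨k, j, rfl, -⟩ := hv
          rfl
        · intro v hv
          rw [hmemA_d] at hv
          obtain ⟨k, j, rfl⟩ := hv
          rfl
      have heq : (π (a, true)).filter (fun v => Stmt5Aux.isOrigB v = false) ∩ A (a, true)
          = π (a, true) ∩ A (a, true) := by
        ext v
        simp only [Finset.mem_inter, Finset.mem_filter]
        constructor
        · rintro ⟨⟨h1, -⟩, h2⟩
          exact ⟨h1, h2⟩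
        · rintro ⟨h1, h2⟩
          exact ⟨⟨h1, hAc v h2⟩, h2⟩
      rw [hu, hu, e3 a, heq]
    have hle : ∀ i, u i (π i) ≤ u i (π' i) := by
      rintro ⟨a, c⟩
      cases c
      · rcases a with x | m
        · rw [hval1 x, hu]
          exact_mod_cast hub1 x
        · rw [hval3 m, hu]
          exact_mod_cast hub3 m
      · rw [hvalc a]
    have hstrict : ∃ i, u i (π i) < u i (π' i) := by
      rcases not_and_or.mp hnot with h | h
      · push_neg at h
        obtain ⟨x, hx⟩ := h
        refine ⟨(Sum.inl x, false), ?_⟩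
        rw [hval1 x]
        have hle1 : u (Sum.inl x, false) (π (Sum.inl x, false)) ≤ 1 := by
          rw [hu]; exact_mod_cast hub1 x
        exact lt_of_le_of_ne hle1 hx
      · push_neg at h
        obtain ⟨m, hm⟩ := h
        refine ⟨(Sum.inr m, false), ?_⟩
        rw [hval3 m]
        have hle3 : u (Sum.inr m, false) (π (Sum.inr m, false)) ≤ 3 := by
          rw [hu]; exact_mod_cast hub3 m
        exact lt_of_le_of_ne hle3 hm
    exact hPO π' halloc ⟨hle, hstrict⟩
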